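/- arXiv:0706.4201 — 2 statements merged into one kernel-verified Lean document; each statement's English description precedes it below -/
import Mathlib

section
/- Let T^d=(N,E,d) be a tree diagram with n nodes. Then the dimension of the upward nilpotent Lie algebra L_0(T^d) over ℂ equals 1 + Σ_{i=2}^n ℓ_i, where for a node ι_i with clan C_i={ι_{i_1},…,ι_{i_r}} and edge weights d_s = d[(ι_{i_s},ι_{i_{s+1}})] (1≤s≤r−1), ℓ_i is the coefficient of t^{d_1 d_2⋯d_{r−1}} in the formal power series 1/((1−t)^2 (1−t^{d_1})(1−t^{d_1 d_2})⋯(1−t^{d_1 d_2⋯d_{r−2}})); equivalently ℓ_i is the number of tuples (j_1,…,j_{r−1})∈ℕ^{r−1} with j_1 + Σ_{s=2}^{r−1} j_s d_1⋯d_{s−1} ≤ d_1⋯d_{r−1}. -/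
attribute [instance 100] LieRing.ofAssociativeRing

noncomputable section

/-- The algebra of linear operators on polynomials in `n` variables (contains the
differential operators with polynomial coefficients). -/
abbrev DiffOp (n : ℕ) : Type := Module.End ℂ (MvPolynomial (Fin n) ℂ)

/-- The partial derivative operator `∂_{x_i}`. -/
noncomputable def pd {n : ℕ} (i : Fin n) : DiffOp n := (MvPolynomial.pderiv i).toLinearMap

/-- The operator of multiplication by `x_i`. -/
noncomputable def mX {n : ℕ} (i : Fin n) : DiffOp n := LinearMap.mulLeft ℂ (MvPolynomial.X i)

/-- The operator of multiplication by the monomial `∏ x_a ^ (j a)`. -/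
noncomputable def mXpow {n : ℕ} (j : Fin n → ℕ) : DiffOp n :=
  LinearMap.mulLeft ℂ (∏ a : Fin n, (MvPolynomial.X a) ^ (j a))

/-- A tree diagram on `n` nodes (nodes `0,…,n-1`, node `0` being the root): every node
`i ≠ 0` has a unique parent `parent i < i`, and the edge `(parent i, i)` carries a
positive integral weight `weight i`. -/
structure TreeDiagram (n : ℕ) [NeZero n] where
  parent : Fin n → Fin n
  parent_lt : ∀ i : Fin n, i ≠ 0 → parent i < i
  weight : Fin n → ℕ
  weight_pos : ∀ i : Fin n, i ≠ 0 → 0 < weight i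

variable {n : ℕ} [NeZero n]

/-- The clan of a node: the set of nodes on the unique path from the root to `i`
(including both ends). -/
def clanSet (T : TreeDiagram n) : Fin n → Finset (Fin n)
  | i => if h : i = 0 then {i} else insert i (clanSet T (T.parent i))
termination_by i => i.val
decreasing_by exact T.parent_lt i h

/-- The product of the weights of all edges along the path from the root to `i`. -/
def chainWt (T : TreeDiagram n) : Fin n → ℕ
  | i => if h : i = 0 then 1 else chainWt T (T.parent i) * T.weight i
termination_by i => i.val
decreasing_by exact T.parent_lt i h

/-- `j` is a descendant of `i`. -/
def Desc (T : TreeDiagram n) (i j : Fin n) : Prop := i ≠ j ∧ i ∈ clanSet T j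

/-- A node is a tip if it has no children. -/
def IsTip (T : TreeDiagram n) (i : Fin n) : Prop := ∀ j : Fin n, j ≠ 0 → T.parent j ≠ i

/-- Generators `∂_{x_1}` and `x_i^{d[(ι_i,ι_j)]} ∂_{x_j}` for edges `(ι_i,ι_j)`. -/
def upGens (T : TreeDiagram n) : Set (DiffOp n) :=
  {pd (0 : Fin n)} ∪ {A | ∃ j : Fin n, j ≠ 0 ∧ A = (mX (T.parent j)) ^ (T.weight j) * pd j}

/-- Generators `∂_{x_r}` for tips `ι_r` and `x_j^{d[(ι_i,ι_j)]} ∂_{x_i}` for edges. -/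
def downGens (T : TreeDiagram n) : Set (DiffOp n) :=
  {A | ∃ r : Fin n, IsTip T r ∧ A = pd r} ∪
    {A | ∃ j : Fin n, j ≠ 0 ∧ A = (mX j) ^ (T.weight j) * pd (T.parent j)}

/-- The upward nilpotent Lie algebra `L_0(T^d)`. -/
def upL0 (T : TreeDiagram n) : LieSubalgebra ℂ (DiffOp n) :=
  LieSubalgebra.lieSpan ℂ _ (upGens T)

/-- The downward nilpotent Lie algebra `ℒ_0(T^d)`. -/
def downL0 (T : TreeDiagram n) : LieSubalgebra ℂ (DiffOp n) :=
  LieSubalgebra.lieSpan ℂ _ (downGens T)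

/-- The toral Cartan subalgebra `H = Σ ℂ x_i ∂_{x_i}`. -/
def Hcart (n : ℕ) : Submodule ℂ (DiffOp n) :=
  Submodule.span ℂ (Set.range fun i : Fin n => mX i * pd i)

/-- `L_1(T^d) = H + L_0(T^d)`. -/
def upL1 (T : TreeDiagram n) : Submodule ℂ (DiffOp n) := Hcart n ⊔ (upL0 T).toSubmodule

/-- `ℒ_1(T^d) = H + ℒ_0(T^d)`. -/
def downL1 (T : TreeDiagram n) : Submodule ℂ (DiffOp n) := Hcart n ⊔ (downL0 T).toSubmodule

/-- `I` is an abelian (Lie) ideal of `L`. -/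
def IsAbelianIdeal (L I : Submodule ℂ (DiffOp n)) : Prop :=
  I ≤ L ∧ (∀ x ∈ L, ∀ y ∈ I, ⁅x, y⁆ ∈ I) ∧ ∀ x ∈ I, ∀ y ∈ I, ⁅x, y⁆ = (0 : DiffOp n)

/-- The lower central series: `lcs L k = G^{k+1}` in the paper's notation
(`G^1 = G`, `G^{i+1} = [G, G^i]`). -/
def lcs (L : LieSubalgebra ℂ (DiffOp n)) : ℕ → Submodule ℂ (DiffOp n)
  | 0 => L.toSubmodule
  | (k+1) => Submodule.span ℂ {z : DiffOp n | ∃ x ∈ L, ∃ y ∈ lcs L k, z = ⁅x, y⁆}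

/-- Membership in `R_i`: exponent tuples supported on the strict ancestors of `i`
(the clan of `i` with `i` removed) with `Σ_a j_a · d_1⋯d_{s(a)-1} ≤ d_1⋯d_{r-1}`. -/
def memR (T : TreeDiagram n) (i : Fin n) (j : Fin n → ℕ) : Prop :=
  (∀ a : Fin n, a ∉ (clanSet T i).erase i → j a = 0) ∧
    ∑ a ∈ (clanSet T i).erase i, j a * chainWt T a ≤ chainWt T i

/-- `ℓ_i`: the number of exponent tuples in `R_i`. -/
def ellCard (T : TreeDiagram n) (i : Fin n) : ℕ := Nat.card {j : Fin n → ℕ // memR T i j}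

/-- A node is multiplicity-free if the edge to its parent has weight 1. -/
def MultFree (T : TreeDiagram n) (i : Fin n) : Prop := i ≠ 0 ∧ T.weight i = 1

/-- `Υ`: the set of nodes all of whose descendants are multiplicity-free. -/
def Upsilon (T : TreeDiagram n) : Set (Fin n) := {i | ∀ j : Fin n, Desc T i j → MultFree T j}

/-- A set of nodes is independent if no element is a descendant of another. -/
def IndepSet (T : TreeDiagram n) (S : Set (Fin n)) : Prop :=
  ∀ a ∈ S, ∀ b ∈ S, ¬ Desc T a b

/-- The ideal `I(S) = Span{x^{j⃗}∂_{x_i}, x^{j⃗}∂_{x_s} : ι_i ∈ S, j⃗ ∈ R_i, ι_s ∈ D_i}`. -/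
def upIdealS (T : TreeDiagram n) (S : Set (Fin n)) : Submodule ℂ (DiffOp n) :=
  Submodule.span ℂ
    {A : DiffOp n | ∃ i ∈ S, ∃ j : Fin n → ℕ, memR T i j ∧
      ∃ s : Fin n, (s = i ∨ Desc T i s) ∧ A = mXpow j * pd s}

/-- The partial order `⪯` on `R_i`. -/
def Rle (T : TreeDiagram n) (i : Fin n) (j l : Fin n → ℕ) : Prop :=
  ∀ b ∈ (clanSet T i).erase i,
    ∑ a ∈ ((clanSet T i).erase i).filter (fun a => b ∈ clanSet T a),
        j a * (chainWt T a / chainWt T b) ≤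
      ∑ a ∈ ((clanSet T i).erase i).filter (fun a => b ∈ clanSet T a),
        l a * (chainWt T a / chainWt T b)

/-- `W = S ∪ ⋃_{ι_i ∈ S} D_i`. -/
def Wset (T : TreeDiagram n) (S : Set (Fin n)) : Set (Fin n) :=
  {r | ∃ i ∈ S, r = i ∨ Desc T i r}

/-- An admissible pair for abelian ideals of `L_1(T^d)`. -/
structure UpAdmiss (n : ℕ) [NeZero n] (T : TreeDiagram n) where
  S : Set (Fin n)
  K : Fin n → Set (Fin n → ℕ)
  S_ne : S.Nonempty
  S_sub : S ⊆ Upsilon T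
  S_indep : IndepSet T S
  K_out : ∀ r : Fin n, r ∉ Wset T S → K r = ∅
  K_mem : ∀ i ∈ S, ∀ r : Fin n, (r = i ∨ Desc T i r) → ∀ j ∈ K r, memR T i j
  K_indep : ∀ i ∈ S, ∀ r : Fin n, (r = i ∨ Desc T i r) →
    ∀ j ∈ K r, ∀ l ∈ K r, Rle T i j l → Rle T i l j
  K_ne : ∀ i ∈ S, (K i).Nonempty
  K_chain : ∀ i ∈ S, ∀ r : Fin n, (r = i ∨ Desc T i r) → ∀ s : Fin n, Desc T r s →
    ∀ j ∈ K r, ∀ l ∈ K s, ¬ (Rle T i l j ∧ ¬ Rle T i j l)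

/-- The abelian ideal `I[S,{K_r}] = Σ_{ι_s∈W} Σ_{j⃗∈K_s} I[s,j⃗]`. -/
def upAdIdeal (T : TreeDiagram n) (P : UpAdmiss n T) : Submodule ℂ (DiffOp n) :=
  Submodule.span ℂ
    {A : DiffOp n | ∃ i ∈ P.S, ∃ s : Fin n, (s = i ∨ Desc T i s) ∧ ∃ j ∈ P.K s,
      ∃ l : Fin n → ℕ, memR T i l ∧ Rle T i l j ∧
        ∃ r : Fin n, (r = s ∨ Desc T s r) ∧ A = mXpow l * pd r}

instance (T : TreeDiagram n) (i : Fin n) : Decidable (IsTip T i) :=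
  decidable_of_iff (∀ j : Fin n, j ≠ 0 → T.parent j ≠ i) Iff.rfl

instance (T : TreeDiagram n) (i j : Fin n) : Decidable (Desc T i j) :=
  decidable_of_iff (i ≠ j ∧ i ∈ clanSet T j) Iff.rfl

/-- `D_i` as a finset. -/
def Dfin (T : TreeDiagram n) (i : Fin n) : Finset (Fin n) :=
  Finset.univ.filter fun j => Desc T i j

/-- `κ_i`: the product of the weights of all edges inside `F_i = {ι_i} ∪ D_i`. -/
def kappa (T : TreeDiagram n) (i : Fin n) : ℕ := ∏ j ∈ Dfin T i, T.weight j

/-- The product of the weights of the edges on the path from `i` to a descendant `j`: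
`∏_{e ∈ E_{i,j}} d(e)`. -/
def pathWt (T : TreeDiagram n) (i j : Fin n) : ℕ :=
  ∏ a ∈ (clanSet T j) \ (clanSet T i), T.weight a

/-- `κ_{i,j} = κ_i / ∏_{e ∈ E_{i,j}} d(e)`. -/
def kappaIS (T : TreeDiagram n) (i j : Fin n) : ℕ := kappa T i / pathWt T i j

/-- Membership in `ℜ_i`: tuples supported on `D_i` with `Σ_s j_s κ_{i,s} ≤ κ_i`. -/
def memcR (T : TreeDiagram n) (i : Fin n) (j : Fin n → ℕ) : Prop :=
  (∀ a : Fin n, ¬ Desc T i a → j a = 0) ∧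
    ∑ a ∈ Dfin T i, j a * kappaIS T i a ≤ kappa T i

/-- The partial order `⪯` on `ℜ_i`. -/
def cRle (T : TreeDiagram n) (i : Fin n) (j l : Fin n → ℕ) : Prop :=
  ∀ m : Fin n, Desc T i m →
    ∑ r ∈ (clanSet T (T.parent m)) \ (clanSet T i), j r * pathWt T r (T.parent m) ≤
      ∑ r ∈ (clanSet T (T.parent m)) \ (clanSet T i), l r * pathWt T r (T.parent m)

/-- `Φ = {ι_1} ∪ {ι_i : all edges inside the clan of `ι_i` have weight 1}`. -/
def PhiSet (T : TreeDiagram n) : Set (Fin n) :=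
  {i | ∀ a ∈ clanSet T i, a ≠ 0 → T.weight a = 1}

/-- `Ω`: the set of children of the root. -/
def OmegaSet (T : TreeDiagram n) : Set (Fin n) := {i | i ≠ 0 ∧ T.parent i = 0}

/-- The ideal `𝓘(S) = Span{x^{j⃗}∂_{x_s} : ι_i ∈ S, j⃗ ∈ ℜ_i, ι_s ∈ C_i}`. -/
def downIdealS (T : TreeDiagram n) (S : Set (Fin n)) : Submodule ℂ (DiffOp n) :=
  Submodule.span ℂ
    {A : DiffOp n | ∃ i ∈ S, ∃ j : Fin n → ℕ, memcR T i j ∧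
      ∃ s ∈ clanSet T i, A = mXpow j * pd s}

/-- An admissible pair for abelian ideals of `ℒ_1(T^d)`. -/
structure DownAdmiss (n : ℕ) [NeZero n] (T : TreeDiagram n) where
  S : Set (Fin n)
  K : Fin n → Fin n → Set (Fin n → ℕ)
  S_ne : S.Nonempty
  S_sub : S ⊆ PhiSet T
  S_indep : IndepSet T S
  K_out : ∀ i r : Fin n, (i ∉ S ∨ r ∉ clanSet T i) → K i r = ∅
  K_mem : ∀ i ∈ S, ∀ r ∈ clanSet T i, ∀ j ∈ K i r, memcR T i j
  K_indep : ∀ i ∈ S, ∀ r ∈ clanSet T i, ∀ j ∈ K i r, ∀ l ∈ K i r,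
    cRle T i j l → cRle T i l j
  K_ne : ∀ i ∈ S, (K i i).Nonempty
  K_cond : ∀ i ∈ S, ∀ s ∈ clanSet T i, ∀ r ∈ clanSet T s, r ≠ s →
    ∀ j ∈ K i r, ∀ l ∈ K i s, ¬ (cRle T i j l ∧ ¬ cRle T i l j)

/-- The abelian ideal `𝓘[S,{𝒦_r}] = Σ_{ι_s∈W} Σ_{j⃗∈𝒦_s} 𝓘[s,j⃗]`. -/
def downAdIdeal (T : TreeDiagram n) (P : DownAdmiss n T) : Submodule ℂ (DiffOp n) :=
  Submodule.span ℂ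
    {A : DiffOp n | ∃ i ∈ P.S, ∃ s ∈ clanSet T i, ∃ j ∈ P.K i s,
      ∃ l : Fin n → ℕ, memcR T s l ∧ cRle T s l j ∧
        ∃ r ∈ clanSet T s, A = mXpow l * pd r}

end

noncomputable section

/-- `A` acts locally nilpotently at `p`. -/
def LocNilpOn {M : Type} [AddCommGroup M] [Module ℂ M] (A : Module.End ℂ M) (p : M) : Prop :=
  ∃ N : ℕ, ∀ k : ℕ, N ≤ k → (A ^ k) p = 0

open scoped Classical in
/-- `e^A(p) = Σ_k A^k(p)/k!`, a finite sum when `A` acts locally nilpotently at `p`. -/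
noncomputable def expApply {M : Type} [AddCommGroup M] [Module ℂ M]
    (A : Module.End ℂ M) (p : M) : M :=
  if h : LocNilpOn A p then
    ∑ k ∈ Finset.range h.choose, ((k.factorial : ℂ))⁻¹ • (A ^ k) p
  else 0

open scoped Classical in
/-- `θ(A)(q) = Σ_{i≥1} ((−1)^{i−1}/i!) A^{i−1}(q)` where `θ(x) = (1−e^{−x})/x`. -/
noncomputable def thetaApply {M : Type} [AddCommGroup M] [Module ℂ M]
    (A : Module.End ℂ M) (q : M) : M :=
  if h : LocNilpOn A q then
    ∑ k ∈ Finset.range h.choose, ((-1 : ℂ) ^ k * (((k + 1).factorial : ℂ))⁻¹) • (A ^ k) q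
  else 0

abbrev DiffOp' (n : ℕ) : Type := Module.End ℂ (MvPolynomial (Fin n) ℂ)

noncomputable def pd' {n : ℕ} (i : Fin n) : DiffOp' n := (MvPolynomial.pderiv i).toLinearMap
noncomputable def mX' {n : ℕ} (i : Fin n) : DiffOp' n := LinearMap.mulLeft ℂ (MvPolynomial.X i)

/-- `D_i = t(∂_{x_1} + Σ_{r=1}^{i-1} x_r^{m_r} ∂_{x_{r+1}})` (0-based indices). -/
noncomputable def DchainOp (n : ℕ) (hn : 0 < n) (m : ℕ → ℕ) (t : ℂ) (i : ℕ) : DiffOp' n :=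
  t • (pd' (⟨0, hn⟩ : Fin n) +
    ∑ k ∈ Finset.univ.filter (fun k : Fin n => 0 < k.val ∧ k.val < i),
      (mX' (⟨k.val - 1, lt_of_le_of_lt (Nat.sub_le _ _) k.isLt⟩ : Fin n)) ^ (m k.val) * pd' k)

/-- `η_{j+1}` of the chain: `η_1(t) = t`, `η_{j+2}(t) = ∫_0^t (x_{j+1} + η_{j+1}(y))^{m_{j+1}} dy`. -/
noncomputable def etaChain (m : ℕ → ℕ) (x : ℕ → ℝ) : ℕ → ℝ → ℝ
  | 0 => fun t => t
  | (j+1) => fun t => ∫ y in (0:ℝ)..t, (x j + etaChain m x j y) ^ (m (j+1))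

/-- `ξ̃_{n-k}` of the chain (reversed indexing):
`ξ̃_n(t) = t w_n^{m_n}`, `ξ̃_i(t) = ∫_0^t (w_i + ξ̃_{i+1}(y))^{m_i} dy`. -/
noncomputable def xiRev (n : ℕ) (m : ℕ → ℕ) (w : ℕ → ℂ) : ℕ → ℝ → ℂ
  | 0 => fun t => (t : ℂ) * (w (n-1)) ^ (m n)
  | (k+1) => fun t => ∫ y in (0:ℝ)..t, (w (n-k-2) + xiRev n m w k y) ^ (m (n-k-1))

/-- Formal antiderivative `∫_0^t` of a polynomial. -/
noncomputable def polyInt (p : Polynomial ℂ) : Polynomial ℂ :=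
  p.sum fun k a => Polynomial.C (a / (k + 1)) * Polynomial.X ^ (k + 1)

/-- Coefficient-wise antiderivative of a polynomial in the commuting symbols `∂_{x_i}`
with coefficients polynomial in `t`. -/
noncomputable def mvPolyInt {n : ℕ} (q : MvPolynomial (Fin n) (Polynomial ℂ)) :
    MvPolynomial (Fin n) (Polynomial ℂ) :=
  ∑ d ∈ q.support, MvPolynomial.monomial d (polyInt (q.coeff d))

/-- Interpretation of a commutative polynomial in the symbols `∂_{x_i}` as a
constant-coefficient differential operator. -/
noncomputable def opOfDeriv {n : ℕ} (P : MvPolynomial (Fin n) ℂ) : DiffOp' n :=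
  ∑ d ∈ P.support, P.coeff d • ((List.finRange n).map fun a => pd' a ^ d a).prod

/-- `(Σ a_k x^k)` coefficients of the Campbell–Hausdorff formula. -/
noncomputable def aCH : ℕ → ℚ
  | 0 => 1
  | (k+1) => ∑ mm ∈ Finset.Icc 1 (k+2), ((-1 : ℚ)) ^ (mm - 1) / mm *
      ∑ p ∈ Finset.Nat.antidiagonalTuple mm (k + 2 - mm),
        ((∏ i : Fin mm, (if i.val = mm - 1 then (p i).factorial
          else ((p i) + 1).factorial : ℕ) : ℕ) : ℚ)⁻¹

end

noncomputable section
variable {n : ℕ} [NeZero n]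

/-- `η_i(t)` for a tree: `η_1(t) = t`,
`η_i(t) = ∫_0^t (x_{p(i)} + η_{p(i)}(y))^{d[(ι_{p(i)},ι_i)]} dy`. -/
noncomputable def etaTree (T : TreeDiagram n) (x : Fin n → ℝ) : Fin n → ℝ → ℝ
  | i => if h : i = 0 then fun t => t
      else fun t => ∫ y in (0:ℝ)..t, (x (T.parent i) + etaTree T x (T.parent i) y) ^ (T.weight i)
termination_by i => i.val
decreasing_by exact T.parent_lt i h

/-- The children of a node. -/
def childFinset (T : TreeDiagram n) (i : Fin n) : Finset (Fin n) :=
  Finset.univ.filter fun s : Fin n => s ≠ 0 ∧ T.parent s = i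

/-- `ξ̃_i(t)` as a polynomial in the commuting symbols `∂_{x_j}` (the variables of the
`MvPolynomial`) with coefficients polynomial in `t`:
`ξ̃_r(t) = t ∂_{x_r}^{m_r}` for tips, and
`ξ̃_i(t) = ∫_0^t (∂_{x_i} + Σ_{ι_s∈Θ_i} ξ̃_s(y))^{m_i} dy` otherwise. -/
noncomputable def xiTree (T : TreeDiagram n) (m : Fin n → ℕ) :
    Fin n → MvPolynomial (Fin n) (Polynomial ℂ)
  | i =>
    if IsTip T i then MvPolynomial.C Polynomial.X * (MvPolynomial.X i) ^ (m i)
    else mvPolyInt ((MvPolynomial.X i +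
      ∑ s ∈ (childFinset T i).attach, xiTree T m s.1) ^ (m i))
termination_by i => n - i.val
decreasing_by
  have hs := s.2
  simp only [childFinset, Finset.mem_filter, Finset.mem_univ, true_and] at hs
  have h1 : T.parent s.1 < s.1 := T.parent_lt s.1 hs.1
  rw [hs.2] at h1
  have h2 := s.1.isLt
  have h3 : i.val < s.1.val := h1
  omega

/-- The operator `ξ_i`: `ξ_1 = ξ̃_1(t)` and `ξ_i = x_{p(i)}·ξ̃_i(t)` for `i ≥ 2`. -/
noncomputable def xiFull (T : TreeDiagram n) (m : Fin n → ℕ) (t : ℂ) (i : Fin n) : DiffOp n :=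
  if i = 0 then opOfDeriv ((xiTree T m i).map (Polynomial.evalRingHom t))
  else mX (T.parent i) * opOfDeriv ((xiTree T m i).map (Polynomial.evalRingHom t))

/-- `D = ∂_{x_1}^{m_1} + Σ_{(ι_i,ι_j)∈E} x_i ∂_{x_j}^{m_j}`. -/
noncomputable def Dtree (T : TreeDiagram n) (m : Fin n → ℕ) : DiffOp n :=
  pd (0 : Fin n) ^ (m 0) +
    ∑ j ∈ Finset.univ.filter (fun j : Fin n => j ≠ 0), mX (T.parent j) * pd j ^ (m j)

/-- The chain tree `T_{A_n}` with all weights `1`. -/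
def chainTree (n : ℕ) [NeZero n] : TreeDiagram n where
  parent := fun i => ⟨i.val - 1, lt_of_le_of_lt (Nat.sub_le _ _) i.isLt⟩
  parent_lt := by
    intro i hi
    have h0 : i.val ≠ 0 := by
      intro h; exact hi (Fin.ext (by simpa using h))
    simp only [Fin.lt_def]
    omega
  weight := fun _ => 1
  weight_pos := fun _ _ => one_pos

end

noncomputable section
open MvPolynomial LinearMap

namespace UPL
variable {n : ℕ}

def Mon (j : Fin n → ℕ) : MvPolynomial (Fin n) ℂ := ∏ a, X a ^ j a

lemma mXpow_def (j : Fin n → ℕ) : mXpow j = mulLeft ℂ (Mon j) := rfl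

def sub1 (l : Fin n → ℕ) (s : Fin n) : Fin n → ℕ := Function.update l s (l s - 1)

lemma Mon_eq_monomial (j : Fin n → ℕ) :
    Mon j = monomial (Finsupp.equivFunOnFinite.symm j) 1 := by
  rw [monomial_eq, C_1, one_mul, Finsupp.prod_fintype]
  · rfl
  · intro a; exact pow_zero _

lemma Mon_mul (j l : Fin n → ℕ) : Mon j * Mon l = Mon (j + l) := by
  unfold Mon
  rw [← Finset.prod_mul_distrib]
  exact Finset.prod_congr rfl fun a _ => (pow_add _ _ _).symm

lemma pderiv_Mon (s : Fin n) (l : Fin n → ℕ) :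
    pderiv s (Mon l) = (l s : ℂ) • Mon (sub1 l s) := by
  rw [Mon_eq_monomial, Mon_eq_monomial, pderiv_monomial]
  have h : Finsupp.equivFunOnFinite.symm l - Finsupp.single s 1
      = Finsupp.equivFunOnFinite.symm (sub1 l s) := by
    ext a
    by_cases h : a = s
    · subst h; simp [sub1]
    · simp [sub1, Function.update_of_ne h, Finsupp.single_apply, Ne.symm h]
  rw [h, one_mul, smul_monomial, smul_eq_mul, mul_one]
  rfl

lemma pd_mul_mXpow (s : Fin n) (l : Fin n → ℕ) :
    pd s * mXpow l = (l s : ℂ) • mXpow (sub1 l s) + mXpow l * pd s := by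
  apply LinearMap.ext; intro p
  simp only [Module.End.mul_apply, LinearMap.add_apply, LinearMap.smul_apply, mXpow_def, mulLeft_apply]
  show pderiv s (Mon l * p) = (l s : ℂ) • (Mon (sub1 l s) * p) + Mon l * pderiv s p
  rw [pderiv_mul, pderiv_Mon, smul_mul_assoc]

lemma pd_comm (s t : Fin n) : pd s * pd t = pd t * pd s := by
  apply LinearMap.ext; intro p
  simp only [Module.End.mul_apply]
  show pderiv s (pderiv t p) = pderiv t (pderiv s p)
  induction p using MvPolynomial.induction_on' with
  | add p q hp hq => simp [hp, hq]
  | monomial d a =>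
    rw [pderiv_monomial, pderiv_monomial, pderiv_monomial, pderiv_monomial]
    by_cases h : s = t
    · subst h; rfl
    · have h1 : ((d - Finsupp.single t 1 : Fin n →₀ ℕ)) s = d s := by
        rw [Finsupp.tsub_apply, Finsupp.single_apply, if_neg (Ne.symm h), Nat.sub_zero]
      have h2 : ((d - Finsupp.single s 1 : Fin n →₀ ℕ)) t = d t := by
        rw [Finsupp.tsub_apply, Finsupp.single_apply, if_neg h, Nat.sub_zero]
      rw [h1, h2, tsub_right_comm]
      ring_nf

lemma mXpow_mul (j l : Fin n → ℕ) : mXpow j * mXpow l = mXpow (j + l) := by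
  rw [mXpow_def, mXpow_def, mXpow_def, ← Mon_mul, mulLeft_mul, Module.End.mul_eq_comp]

lemma bracket_formula (j l : Fin n → ℕ) (s t : Fin n) :
    ⁅mXpow j * pd s, mXpow l * pd t⁆ =
      (l s : ℂ) • (mXpow (j + sub1 l s) * pd t)
        - (j t : ℂ) • (mXpow (l + sub1 j t) * pd s) := by
  have key : ∀ (j l : Fin n → ℕ) (s t : Fin n),
      mXpow j * pd s * (mXpow l * pd t) =
        (l s : ℂ) • (mXpow (j + sub1 l s) * pd t) + mXpow (j + l) * (pd s * pd t) := by
    intro j l s t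
    rw [mul_assoc, ← mul_assoc (pd s), pd_mul_mXpow]
    simp only [add_mul, mul_add, smul_mul_assoc, mul_smul_comm, ← mul_assoc, mXpow_mul]
  rw [Ring.lie_def, key, key, pd_comm t s, add_comm l j]
  abel

end UPL

end
noncomputable section
namespace UPL
open MvPolynomial LinearMap Finset

variable {n : ℕ} [NeZero n] (T : TreeDiagram n)

lemma tree_induction {P : Fin n → Prop}
    (h : ∀ i : Fin n, (i ≠ 0 → P (T.parent i)) → P i) (i : Fin n) : P i := by
  have key : ∀ k : ℕ, ∀ i : Fin n, i.val = k → P i := by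
    intro k
    induction k using Nat.strong_induction_on with
    | _ k IH =>
      intro i hik
      apply h
      intro hi
      refine IH (T.parent i).val ?_ _ rfl
      rw [← hik]
      exact T.parent_lt i hi
  exact key i.val i rfl

lemma clanSet_eq (i : Fin n) :
    clanSet T i = if i = 0 then {i} else insert i (clanSet T (T.parent i)) := by
  rw [clanSet]
  split <;> rfl

lemma chainWt_eq (i : Fin n) :
    chainWt T i = if i = 0 then 1 else chainWt T (T.parent i) * T.weight i := by
  rw [chainWt]
  split <;> rfl

lemma clan_zero : clanSet T (0 : Fin n) = {0} := by rw [clanSet_eq]; simp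

lemma clan_of_ne {i : Fin n} (h : i ≠ 0) :
    clanSet T i = insert i (clanSet T (T.parent i)) := by rw [clanSet_eq, if_neg h]

lemma self_mem_clan (i : Fin n) : i ∈ clanSet T i := by
  rw [clanSet_eq]; split <;> simp

lemma mem_clan_le (i : Fin n) : ∀ a ∈ clanSet T i, a ≤ i := by
  induction i using tree_induction T with
  | h i IH =>
    intro a ha
    rw [clanSet_eq] at ha
    by_cases hi : i = 0
    · rw [if_pos hi] at ha
      rw [Finset.mem_singleton.mp ha]
    · rw [if_neg hi, Finset.mem_insert] at ha
      rcases ha with ha | ha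
      · exact le_of_eq ha
      · exact le_trans (IH hi a ha) (le_of_lt (T.parent_lt i hi))

lemma zero_mem_clan (i : Fin n) : (0 : Fin n) ∈ clanSet T i := by
  induction i using tree_induction T with
  | h i IH =>
    by_cases hi : i = 0
    · subst hi; rw [clan_zero]; simp
    · rw [clan_of_ne T hi]
      exact Finset.mem_insert_of_mem (IH hi)

lemma not_mem_clan_parent {i : Fin n} (h : i ≠ 0) : i ∉ clanSet T (T.parent i) := by
  intro hmem
  exact absurd (mem_clan_le T _ i hmem) (not_le.mpr (T.parent_lt i h))

lemma erase_clan {i : Fin n} (h : i ≠ 0) :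
    (clanSet T i).erase i = clanSet T (T.parent i) := by
  rw [clan_of_ne T h, Finset.erase_insert (not_mem_clan_parent T h)]

lemma clan_trans : ∀ b a : Fin n, a ∈ clanSet T b → clanSet T a ⊆ clanSet T b := by
  intro b
  induction b using tree_induction T with
  | h b IH =>
    intro a ha
    by_cases hb : b = 0
    · subst hb
      rw [clan_zero] at ha
      rw [Finset.mem_singleton.mp ha]
    · rw [clan_of_ne T hb] at ha ⊢
      rcases Finset.mem_insert.mp ha with ha | ha
      · subst ha; rw [← clan_of_ne T hb]
      · exact le_trans (IH hb a ha) (Finset.subset_insert _ _)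

lemma chainWt_pos (i : Fin n) : 0 < chainWt T i := by
  induction i using tree_induction T with
  | h i IH =>
    rw [chainWt_eq]
    by_cases hi : i = 0
    · rw [if_pos hi]; norm_num
    · rw [if_neg hi]
      exact Nat.mul_pos (IH hi) (T.weight_pos i hi)

lemma chainWt_dvd : ∀ b a : Fin n, a ∈ clanSet T b → chainWt T a ∣ chainWt T b := by
  intro b
  induction b using tree_induction T with
  | h b IH =>
    intro a ha
    by_cases hb : b = 0
    · subst hb
      rw [clan_zero] at ha
      rw [Finset.mem_singleton.mp ha]
    · rw [clan_of_ne T hb] at ha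
      rcases Finset.mem_insert.mp ha with ha | ha
      · rw [ha]
      · refine dvd_trans (IH hb a ha) ?_
        rw [chainWt_eq T b, if_neg hb]
        exact Dvd.intro _ rfl

/-- total weighted degree -/
def Wtot (j : Fin n → ℕ) : ℕ := ∑ a, j a * chainWt T a

lemma sum_eq_Wtot {s : Finset (Fin n)} {j : Fin n → ℕ} (hsupp : ∀ a ∉ s, j a = 0) :
    ∑ a ∈ s, j a * chainWt T a = Wtot T j :=
  Finset.sum_subset (Finset.subset_univ s) (fun a _ ha => by rw [hsupp a ha, zero_mul])

lemma memR_iff {i : Fin n} {j : Fin n → ℕ} :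
    memR T i j ↔ (∀ a ∉ (clanSet T i).erase i, j a = 0) ∧ Wtot T j ≤ chainWt T i := by
  unfold memR
  constructor
  · rintro ⟨h1, h2⟩
    exact ⟨h1, by rwa [sum_eq_Wtot T h1] at h2⟩
  · rintro ⟨h1, h2⟩
    exact ⟨h1, by rwa [sum_eq_Wtot T h1]⟩

lemma memR_iff' {i : Fin n} (hi : i ≠ 0) {j : Fin n → ℕ} :
    memR T i j ↔ (∀ a ∉ clanSet T (T.parent i), j a = 0) ∧ Wtot T j ≤ chainWt T i := by
  rw [memR_iff, erase_clan T hi]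

end UPL
end

noncomputable section
namespace UPL
open MvPolynomial LinearMap Finset

variable {n : ℕ} [NeZero n] (T : TreeDiagram n)

lemma chainWt_zero : chainWt T (0 : Fin n) = 1 := by rw [chainWt_eq]; simp

lemma Wtot_single (s : Fin n) (c : ℕ) :
    Wtot T (fun a => if a = s then c else 0) = c * chainWt T s := by
  unfold Wtot
  rw [Finset.sum_eq_single s (fun b _ hb => by simp [hb]) (fun h => absurd (Finset.mem_univ s) h)]
  simp

lemma Wtot_update_zero (l : Fin n → ℕ) (s : Fin n) :
    Wtot T (Function.update l s 0) + l s * chainWt T s = Wtot T l := by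
  unfold Wtot
  rw [← Finset.sum_erase_add _ _ (Finset.mem_univ s),
    ← Finset.sum_erase_add (f := fun a => l a * chainWt T a) _ (Finset.mem_univ s),
    Function.update_self, zero_mul, add_zero]
  congr 1
  apply Finset.sum_congr rfl
  intro a ha
  rw [Function.update_of_ne (Finset.ne_of_mem_erase ha)]

lemma Wtot_add (j l : Fin n → ℕ) : Wtot T (j + l) = Wtot T j + Wtot T l := by
  unfold Wtot
  rw [← Finset.sum_add_distrib]
  exact Finset.sum_congr rfl fun a _ => by show (j a + l a) * _ = _; rw [add_mul]

lemma Wtot_sub1 {l : Fin n → ℕ} {s : Fin n} (h : l s ≠ 0) :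
    Wtot T (sub1 l s) + chainWt T s = Wtot T l := by
  have h1 := Wtot_update_zero T l s
  have h2 := Wtot_update_zero T (sub1 l s) s
  have h3 : Function.update (sub1 l s) s 0 = Function.update l s 0 := by
    funext a
    by_cases ha : a = s
    · subst ha; simp
    · simp [Function.update_of_ne ha, sub1]
  rw [h3] at h2
  have h4 : sub1 l s s = l s - 1 := by simp [sub1]
  rw [h4] at h2
  have h5 : (l s - 1) * chainWt T s + chainWt T s = l s * chainWt T s := by
    have : l s - 1 + 1 = l s := Nat.succ_pred_eq_of_pos (Nat.pos_of_ne_zero h)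
    calc (l s - 1) * chainWt T s + chainWt T s = (l s - 1 + 1) * chainWt T s := by ring
    _ = l s * chainWt T s := by rw [this]
  omega

lemma le_Wtot {l : Fin n → ℕ} {s : Fin n} (h : l s ≠ 0) : chainWt T s ≤ Wtot T l := by
  have h1 : l s * chainWt T s ≤ Wtot T l :=
    Finset.single_le_sum (f := fun a => l a * chainWt T a) (fun a _ => Nat.zero_le _)
      (Finset.mem_univ s)
  have h2 : chainWt T s ≤ l s * chainWt T s :=
    Nat.le_mul_of_pos_left _ (Nat.pos_of_ne_zero h)
  omega

lemma memR_zero_iff {j : Fin n → ℕ} : memR T (0 : Fin n) j ↔ j = 0 := by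
  rw [memR_iff]
  constructor
  · rintro ⟨h1, _⟩
    funext a
    apply h1
    rw [clan_zero]
    simp
  · rintro rfl
    refine ⟨fun a _ => rfl, ?_⟩
    have : Wtot T (0 : Fin n → ℕ) = 0 := by
      unfold Wtot; apply Finset.sum_eq_zero; intro a _; show 0 * _ = 0; ring
    rw [this]
    exact Nat.zero_le _

/-- The spanning set of monomial operators. -/
def Bset : Set (DiffOp n) :=
  {A | ∃ i : Fin n, ∃ j : Fin n → ℕ, memR T i j ∧ A = mXpow j * pd i}

lemma mXpow_zero : mXpow (0 : Fin n → ℕ) = (1 : DiffOp n) := by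
  unfold mXpow
  have : (∏ a : Fin n, (X a : MvPolynomial (Fin n) ℂ) ^ (0 : Fin n → ℕ) a) = 1 := by
    apply Finset.prod_eq_one; intro a _; exact pow_zero _
  rw [this, mulLeft_one]
  rfl

lemma pd_zero_eq : (pd (0 : Fin n) : DiffOp n) = mXpow (0 : Fin n → ℕ) * pd 0 := by
  rw [mXpow_zero, one_mul]

lemma memR_step {s t : Fin n} {j l : Fin n → ℕ} (hj : memR T s j) (hl : memR T t l)
    (hls : l s ≠ 0) : memR T t (j + sub1 l s) := by
  rw [memR_iff] at hj hl ⊢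
  obtain ⟨hjsupp, hjsum⟩ := hj
  obtain ⟨hlsupp, hlsum⟩ := hl
  have hsE : s ∈ (clanSet T t).erase t := by
    by_contra hs
    exact hls (hlsupp s hs)
  have hst : s ≠ t := Finset.ne_of_mem_erase hsE
  have hsct : s ∈ clanSet T t := Finset.mem_of_mem_erase hsE
  constructor
  · intro a ha
    have hla : l a = 0 ∨ a ≠ s := by
      by_cases h : a = s
      · subst h; exact absurd hsE ha
      · exact Or.inr h
    have hsub : sub1 l s a = 0 := by
      rcases hla with h | h
      · by_cases h2 : a = s
        · subst h2; simp [sub1, h]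
        · simp [sub1, Function.update_of_ne h2, hlsupp a ha]
      · simp [sub1, Function.update_of_ne h, hlsupp a ha]
    have hja : j a = 0 := by
      apply hjsupp
      intro haE
      apply ha
      have hacs : a ∈ clanSet T s := Finset.mem_of_mem_erase haE
      have hact : a ∈ clanSet T t := clan_trans T t s hsct hacs
      refine Finset.mem_erase.mpr ⟨?_, hact⟩
      intro hat
      rw [hat] at hacs
      exact hst (le_antisymm (mem_clan_le T t s hsct) (mem_clan_le T s t hacs))
    show j a + sub1 l s a = 0
    rw [hja, hsub]
  · rw [Wtot_add]
    have h1 := Wtot_sub1 T hls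
    have h2 := le_Wtot T hls
    omega

lemma bracket_mem_span : ∀ A ∈ Bset T, ∀ B ∈ Bset T,
    ⁅A, B⁆ ∈ Submodule.span ℂ (Bset T) := by
  rintro A ⟨s, j, hj, rfl⟩ B ⟨t, l, hl, rfl⟩
  rw [bracket_formula]
  apply sub_mem
  · by_cases hls : l s = 0
    · rw [hls]
      simp
    · exact Submodule.smul_mem _ _
        (Submodule.subset_span ⟨t, _, memR_step T hj hl hls, rfl⟩)
  · by_cases hjt : j t = 0
    · rw [hjt]
      simp
    · exact Submodule.smul_mem _ _
        (Submodule.subset_span ⟨s, _, memR_step T hl hj hjt, rfl⟩)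

/-- The span of `Bset` as a Lie subalgebra. -/
def BSub : LieSubalgebra ℂ (DiffOp n) where
  __ := Submodule.span ℂ (Bset T)
  lie_mem' := by
    intro x y hx hy
    induction hx using Submodule.span_induction generalizing y with
    | mem a ha =>
      induction hy using Submodule.span_induction with
      | mem b hb => exact bracket_mem_span T a ha b hb
      | zero => rw [lie_zero]; exact Submodule.zero_mem _
      | add b c _ _ hb hc => rw [lie_add]; exact Submodule.add_mem _ hb hc
      | smul c b _ hb => rw [lie_smul]; exact Submodule.smul_mem _ _ hb
    | zero => rw [zero_lie]; exact Submodule.zero_mem _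
    | add a b _ _ ha hb =>
      rw [add_lie]
      exact Submodule.add_mem _ (ha hy) (hb hy)
    | smul c a _ ha =>
      rw [smul_lie]
      exact Submodule.smul_mem _ _ (ha hy)

/-- Greedy subset-sum along a clan chain. -/
lemma greedy : ∀ s : Fin n, ∀ l : Fin n → ℕ, (∀ a ∉ clanSet T s, l a = 0) →
    ∀ t : ℕ, chainWt T s ∣ t → t ≤ Wtot T l →
    ∃ m : Fin n → ℕ, (∀ a, m a ≤ l a) ∧ (∀ a ∉ clanSet T s, m a = 0) ∧ Wtot T m = t := by
  intro s
  induction s using tree_induction T with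
  | h s IH =>
    intro l hsupp t hdvd hle
    by_cases hs : s = 0
    · subst hs
      refine ⟨fun a => if a = 0 then t else 0, ?_, ?_, ?_⟩
      · intro a
        beta_reduce
        by_cases ha : a = 0
        · subst ha
          rw [if_pos rfl]
          have : Wtot T l = l 0 * chainWt T 0 := by
            have heq : l = fun a => if a = 0 then l 0 else 0 := by
              funext a
              by_cases ha : a = 0
              · subst ha; simp
              · rw [if_neg ha]
                apply hsupp
                rw [clan_zero]
                simp [ha]
            conv_lhs => rw [heq]
            exact Wtot_single T 0 (l 0)
          rw [this, chainWt_zero, mul_one] at hle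
          exact hle
        · rw [if_neg ha]; exact Nat.zero_le _
      · intro a ha
        beta_reduce
        rw [clan_zero] at ha
        simp only [Finset.mem_singleton] at ha
        rw [if_neg ha]
      · show Wtot T (fun a => if a = 0 then t else 0) = t
        rw [Wtot_single, chainWt_zero, mul_one]
    · -- s ≠ 0
      obtain ⟨q, hq⟩ := hdvd
      set p := T.parent s with hp
      set k := min (l s) q with hk
      set l₀ := Function.update l s 0 with hl₀
      have hsupp₀ : ∀ a ∉ clanSet T p, l₀ a = 0 := by
        intro a ha
        by_cases has : a = s
        · subst has; simp [hl₀]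
        · rw [hl₀, Function.update_of_ne has]
          apply hsupp
          rw [clan_of_ne T hs]
          simp only [Finset.mem_insert, not_or]
          exact ⟨has, ha⟩
      have hWl₀ : Wtot T l₀ + l s * chainWt T s = Wtot T l := Wtot_update_zero T l s
      have hdvd' : chainWt T p ∣ chainWt T s * (q - k) := by
        have : chainWt T p ∣ chainWt T s := by
          rw [chainWt_eq T s, if_neg hs]
          exact Dvd.intro _ rfl
        exact dvd_mul_of_dvd_left this _
      have hle' : chainWt T s * (q - k) ≤ Wtot T l₀ := by
        rcases Nat.le_total q (l s) with h | h
        · have : k = q := by omega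
          rw [this]
          simp
        · have hkls : k = l s := by omega
          have hms : chainWt T s * (q - k) = chainWt T s * q - chainWt T s * k :=
            Nat.mul_sub _ _ _
          have h3 : chainWt T s * q ≤ Wtot T l := by rw [← hq]; exact hle
          have h4 : chainWt T s * k = l s * chainWt T s := by rw [hkls]; ring
          omega
      obtain ⟨m', hm'le, hm'supp, hm'W⟩ := IH hs l₀ hsupp₀ _ hdvd' hle'
      have hm's : m' s = 0 := hm'supp s (not_mem_clan_parent T hs)
      refine ⟨fun a => if a = s then k else m' a, ?_, ?_, ?_⟩
      · intro a
        beta_reduce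
        by_cases ha : a = s
        · subst ha
          rw [if_pos rfl]
          omega
        · rw [if_neg ha]
          calc m' a ≤ l₀ a := hm'le a
          _ = l a := by rw [hl₀, Function.update_of_ne ha]
      · intro a ha
        beta_reduce
        have has : a ≠ s := by
          intro h
          subst h
          exact ha (self_mem_clan T a)
        rw [if_neg has]
        apply hm'supp
        intro hmem
        apply ha
        rw [clan_of_ne T hs]
        exact Finset.mem_insert_of_mem hmem
      · have heq : Function.update (fun a => if a = s then k else m' a) s 0 = m' := by
          funext a
          by_cases ha : a = s
          · subst ha; simp [hm's]
          · rw [Function.update_of_ne ha, if_neg ha]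
        have h5 := Wtot_update_zero T (fun a => if a = s then k else m' a) s
        rw [heq] at h5
        simp at h5
        have hkq : k ≤ q := by omega
        have h6 : chainWt T s * (q - k) + k * chainWt T s = chainWt T s * q := by
          have : chainWt T s * (q - k) = chainWt T s * q - chainWt T s * k := Nat.mul_sub _ _ _
          have h7 : chainWt T s * k ≤ chainWt T s * q := Nat.mul_le_mul_left _ hkq
          have h8 : k * chainWt T s = chainWt T s * k := by ring
          omega
        rw [hq, ← h6, ← hm'W]
        omega

lemma mXpow_single (s : Fin n) (c : ℕ) :
    mXpow (fun a => if a = s then c else 0) = (mX s) ^ c := by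
  unfold mXpow mX
  rw [LinearMap.pow_mulLeft]
  congr 1
  rw [Finset.prod_eq_single s (fun b _ hb => by simp [hb])
    (fun h => absurd (Finset.mem_univ s) h)]
  simp

lemma memR_dfun {i : Fin n} (hi : i ≠ 0) :
    memR T i (fun a => if a = T.parent i then T.weight i else 0) := by
  rw [memR_iff' T hi]
  constructor
  · intro a ha
    rw [if_neg]
    intro h
    rw [h] at ha
    exact ha (self_mem_clan T _)
  · rw [Wtot_single, chainWt_eq T i, if_neg hi, mul_comm]

lemma gen_mem {i : Fin n} (hi : i ≠ 0) :
    mXpow (fun a => if a = T.parent i then T.weight i else 0) * pd i ∈ upL0 T := by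
  rw [mXpow_single]
  exact LieSubalgebra.subset_lieSpan (Or.inr ⟨i, hi, rfl⟩)

lemma pd0_mem : pd (0 : Fin n) ∈ upL0 T :=
  LieSubalgebra.subset_lieSpan (Or.inl rfl)

lemma smul_cancel_mem {c : ℕ} (hc : c ≠ 0) {A B : DiffOp n} (h : B = (c : ℂ) • A)
    (hB : B ∈ upL0 T) : A ∈ upL0 T := by
  have h2 : ((c : ℂ))⁻¹ • B ∈ upL0 T := (upL0 T).smul_mem _ hB
  rwa [h, smul_smul, inv_mul_cancel₀ (by exact_mod_cast hc), one_smul] at h2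

lemma base_mem {i : Fin n} (hi : i ≠ 0) {l : Fin n → ℕ} (hmem : memR T i l)
    (hW : chainWt T i ≤ Wtot T l) (hd : T.weight i ≤ l (T.parent i)) :
    mXpow l * pd i ∈ upL0 T := by
  have hWeq : Wtot T l = chainWt T i := le_antisymm ((memR_iff T).mp hmem).2 hW
  have hci : chainWt T i = chainWt T (T.parent i) * T.weight i := by
    rw [chainWt_eq T i, if_neg hi]
  have hwp := chainWt_pos T (T.parent i)
  have h1 : l (T.parent i) * chainWt T (T.parent i) ≤ Wtot T l := by
    have := Finset.single_le_sum (f := fun a => l a * chainWt T a) (fun a _ => Nat.zero_le _)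
      (Finset.mem_univ (T.parent i))
    beta_reduce at this
    exact this
  have h2 : T.weight i * chainWt T (T.parent i) ≤ l (T.parent i) * chainWt T (T.parent i) :=
    Nat.mul_le_mul_right _ hd
  have hls : l (T.parent i) = T.weight i := by
    have : l (T.parent i) * chainWt T (T.parent i) = T.weight i * chainWt T (T.parent i) := by
      have h3 : chainWt T (T.parent i) * T.weight i = T.weight i * chainWt T (T.parent i) := by
        ring
      omega
    exact Nat.eq_of_mul_eq_mul_right hwp this
  have hsum0 : ∑ a ∈ Finset.univ.erase (T.parent i), l a * chainWt T a = 0 := by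
    have h4 := Finset.sum_erase_add Finset.univ (fun a => l a * chainWt T a)
      (Finset.mem_univ (T.parent i))
    beta_reduce at h4
    have h5 : (∑ a : Fin n, l a * chainWt T a) = Wtot T l := rfl
    have h6 : chainWt T (T.parent i) * T.weight i = T.weight i * chainWt T (T.parent i) := by
      ring
    omega
  have hleq : l = fun a => if a = T.parent i then T.weight i else 0 := by
    funext a
    by_cases ha : a = T.parent i
    · rw [ha, if_pos rfl, hls]
    · rw [if_neg ha]
      have h7 : l a * chainWt T a = 0 :=
        (Finset.sum_eq_zero_iff.mp hsum0) a (Finset.mem_erase.mpr ⟨ha, Finset.mem_univ a⟩)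
      have hpos := chainWt_pos T a
      rcases Nat.mul_eq_zero.mp h7 with h | h
      · exact h
      · omega
  rw [hleq]
  exact gen_mem T hi

set_option maxHeartbeats 1000000 in
lemma mem_upL0_of_memR {i : Fin n} (hi : i ≠ 0) {l : Fin n → ℕ} (hl : memR T i l) :
    mXpow l * pd i ∈ upL0 T := by
  have main : ∀ k : ℕ, ∀ i : Fin n, i.val ≤ k → i ≠ 0 → ∀ r : ℕ, ∀ l : Fin n → ℕ,
      memR T i l →
      (chainWt T i - Wtot T l) + (chainWt T i + 1) * (T.weight i - l (T.parent i)) ≤ r →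
      mXpow l * pd i ∈ upL0 T := by
    intro k
    induction k with
    | zero =>
      intro i hik hi
      exact absurd (Fin.ext (Nat.le_zero.mp hik)) hi
    | succ k IHk =>
      intro i hik hi r
      induction r with
      | zero =>
        intro l hmem hρ
        have h1 : chainWt T i ≤ Wtot T l := by omega
        have h2 : T.weight i ≤ l (T.parent i) := by
          have h3 : (chainWt T i + 1) * (T.weight i - l (T.parent i)) = 0 := by omega
          rcases Nat.mul_eq_zero.mp h3 with h | h
          · omega
          · omega
        exact base_mem T hi hmem h1 h2
      | succ r IHr =>
        intro l hmem hρ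
        obtain ⟨hsupp, hsum⟩ := (memR_iff' T hi).mp hmem
        by_cases hbase : chainWt T i ≤ Wtot T l ∧ T.weight i ≤ l (T.parent i)
        · exact base_mem T hi hmem hbase.1 hbase.2
        · by_cases hA : Wtot T l < chainWt T i
          · -- Case A : bracket with ∂₀
            set l' : Fin n → ℕ := l + (fun a => if a = (0 : Fin n) then 1 else 0) with hl'
            have hWl' : Wtot T l' = Wtot T l + 1 := by
              rw [hl', Wtot_add, Wtot_single, chainWt_zero, mul_one]
            have hmem' : memR T i l' := by
              rw [memR_iff' T hi]
              constructor
              · intro a ha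
                have h0 : a ≠ 0 := by
                  intro h
                  rw [h] at ha
                  exact ha (zero_mem_clan T _)
                show l a + (if a = 0 then 1 else 0) = 0
                rw [hsupp a ha, if_neg h0]
              · omega
            have hl's : l (T.parent i) ≤ l' (T.parent i) := by
              show l _ ≤ l _ + _
              exact Nat.le_add_right _ _
            have hmul : (chainWt T i + 1) * (T.weight i - l' (T.parent i)) ≤
                (chainWt T i + 1) * (T.weight i - l (T.parent i)) :=
              Nat.mul_le_mul_left _ (by omega)
            have hρ' : (chainWt T i - Wtot T l') +
                (chainWt T i + 1) * (T.weight i - l' (T.parent i)) ≤ r := by omega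
            have hmemL := IHr l' hmem' hρ'
            have h1 : (0 : Fin n → ℕ) + sub1 l' 0 = l := by
              funext a
              show 0 + sub1 l' 0 a = l a
              by_cases ha : a = 0
              · subst ha
                simp [sub1, hl']
              · simp [sub1, Function.update_of_ne ha, hl', ha]
            have h2 : l' (0 : Fin n) = l 0 + 1 := by simp [hl']
            have hb : ⁅pd (0 : Fin n), mXpow l' * pd i⁆ =
                ((l 0 + 1 : ℕ) : ℂ) • (mXpow l * pd i) := by
              rw [pd_zero_eq, bracket_formula, h1, h2]
              have h3 : ((0 : Fin n → ℕ) i : ℂ) = 0 := by norm_num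
              rw [h3, zero_smul, sub_zero]
            exact smul_cancel_mem T (Nat.succ_ne_zero (l 0)) hb
              ((upL0 T).lie_mem (pd0_mem T) hmemL)
          · -- Case B
            have hWeq : Wtot T l = chainWt T i := le_antisymm hsum (not_lt.mp hA)
            have hld : l (T.parent i) < T.weight i := by
              rcases Nat.lt_or_ge (l (T.parent i)) (T.weight i) with h | h
              · exact h
              · exact absurd ⟨not_lt.mp hA, h⟩ hbase
            have hci : chainWt T i = chainWt T (T.parent i) * T.weight i := by
              rw [chainWt_eq T i, if_neg hi]
            have hs0 : T.parent i ≠ 0 := by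
              intro h0
              have hleq : l = fun a => if a = (0 : Fin n) then l 0 else 0 := by
                funext a
                by_cases ha : a = 0
                · rw [ha, if_pos rfl]
                · rw [if_neg ha]
                  apply hsupp
                  rw [h0, clan_zero]
                  simp [ha]
              have hW0 : Wtot T l = l 0 * 1 := by
                conv_lhs => rw [hleq]
                rw [Wtot_single, chainWt_zero]
              rw [h0, chainWt_zero, one_mul] at hci
              rw [h0] at hld
              have hc0 := chainWt_zero T
              omega
            -- greedy exchange
            set l₀ := Function.update l (T.parent i) 0 with hl₀def
            have hsupp₀ : ∀ a ∉ clanSet T (T.parent i), l₀ a = 0 := by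
              intro a ha
              by_cases has : a = T.parent i
              · rw [has, hl₀def, Function.update_self]
              · rw [hl₀def, Function.update_of_ne has]
                exact hsupp a ha
            have hWl₀ : Wtot T l₀ + l (T.parent i) * chainWt T (T.parent i) = Wtot T l :=
              Wtot_update_zero T l (T.parent i)
            have hle₀ : chainWt T (T.parent i) ≤ Wtot T l₀ := by
              have hmul : (l (T.parent i) + 1) * chainWt T (T.parent i) ≤
                  T.weight i * chainWt T (T.parent i) :=
                Nat.mul_le_mul_right _ (by omega)
              have hexp : (l (T.parent i) + 1) * chainWt T (T.parent i) =
                  l (T.parent i) * chainWt T (T.parent i) + chainWt T (T.parent i) := by ring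
              have hcomm : T.weight i * chainWt T (T.parent i) =
                  chainWt T (T.parent i) * T.weight i := by ring
              omega
            obtain ⟨m, hmle, hmsupp, hmW⟩ :=
              greedy T (T.parent i) l₀ hsupp₀ (chainWt T (T.parent i)) dvd_rfl hle₀
            have hms : m (T.parent i) = 0 := by
              have := hmle (T.parent i)
              rw [hl₀def, Function.update_self] at this
              omega
            have hmlel : ∀ a, m a ≤ l a := by
              intro a
              by_cases has : a = T.parent i
              · rw [has, hms]
                exact Nat.zero_le _
              · have := hmle a
                rwa [hl₀def, Function.update_of_ne has] at this
            have hmi : m i = 0 := by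
              apply hmsupp
              intro hmem2
              have h1 := mem_clan_le T (T.parent i) i hmem2
              have h2 := T.parent_lt i hi
              exact absurd (lt_of_le_of_lt h1 h2) (lt_irrefl i)
            have hmemm : memR T (T.parent i) m := by
              rw [memR_iff' T hs0]
              constructor
              · intro a ha
                by_cases has : a = T.parent i
                · rw [has]; exact hms
                · apply hmsupp
                  rw [clan_of_ne T hs0]
                  simp only [Finset.mem_insert, not_or]
                  exact ⟨has, ha⟩
              · rw [hmW]
            have hm_mem : mXpow m * pd (T.parent i) ∈ upL0 T := by
              have hplt := T.parent_lt i hi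
              refine IHk (T.parent i) ?_ hs0 _ m hmemm (le_refl _)
              have : (T.parent i).val < i.val := hplt
              omega
            set l' : Fin n → ℕ :=
              (fun a => l a - m a) + (fun a => if a = T.parent i then 1 else 0) with hl'
            have hl's : l' (T.parent i) = l (T.parent i) + 1 := by
              simp [hl', hms]
            have hWsub : Wtot T (fun a => l a - m a) + Wtot T m = Wtot T l := by
              unfold Wtot
              rw [← Finset.sum_add_distrib]
              apply Finset.sum_congr rfl
              intro a _
              show (l a - m a) * chainWt T a + m a * chainWt T a = l a * chainWt T a
              rw [← Nat.add_mul, Nat.sub_add_cancel (hmlel a)]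
            have hWl' : Wtot T l' = Wtot T l := by
              rw [hl', Wtot_add, Wtot_single, one_mul]
              omega
            have hmem' : memR T i l' := by
              rw [memR_iff' T hi]
              constructor
              · intro a ha
                have has : a ≠ T.parent i := by
                  intro h
                  rw [h] at ha
                  exact ha (self_mem_clan T _)
                show l a - m a + (if a = T.parent i then 1 else 0) = 0
                rw [hsupp a ha, if_neg has]
                have := hmlel a
                omega
              · omega
            have hρ' : (chainWt T i - Wtot T l') +
                (chainWt T i + 1) * (T.weight i - l' (T.parent i)) ≤ r := by
              rw [hWl', hl's]
              have hexp : (chainWt T i + 1) * (T.weight i - l (T.parent i)) =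
                  (chainWt T i + 1) * (T.weight i - (l (T.parent i) + 1)) +
                    (chainWt T i + 1) := by
                have h9 : T.weight i - l (T.parent i) =
                    (T.weight i - (l (T.parent i) + 1)) + 1 := by omega
                rw [h9, Nat.mul_add, Nat.mul_one]
              omega
            have hmemL := IHr l' hmem' hρ'
            have hsub : m + sub1 l' (T.parent i) = l := by
              funext a
              show m a + sub1 l' (T.parent i) a = l a
              by_cases ha : a = T.parent i
              · rw [ha, hms]
                have : sub1 l' (T.parent i) (T.parent i) = l' (T.parent i) - 1 := by
                  simp [sub1]
                rw [this, hl's]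
                omega
              · have h10 : sub1 l' (T.parent i) a = l' a := by
                  simp [sub1, Function.update_of_ne ha]
                rw [h10]
                show m a + (l a - m a + (if a = T.parent i then 1 else 0)) = l a
                rw [if_neg ha]
                have := hmlel a
                omega
            have hb : ⁅mXpow m * pd (T.parent i), mXpow l' * pd i⁆ =
                ((l (T.parent i) + 1 : ℕ) : ℂ) • (mXpow l * pd i) := by
              rw [bracket_formula, hsub, hl's, hmi]
              norm_num
            exact smul_cancel_mem T (Nat.succ_ne_zero (l (T.parent i))) hb
              ((upL0 T).lie_mem hm_mem hmemL)
  exact main i.val i (le_refl _) hi _ l hl (le_refl _)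

lemma Bset_sub_upL0 : ∀ A ∈ Bset T, A ∈ upL0 T := by
  rintro A ⟨i, j, hmem, rfl⟩
  by_cases hi : i = 0
  · subst hi
    rw [(memR_zero_iff T).mp hmem, ← pd_zero_eq]
    exact pd0_mem T
  · exact mem_upL0_of_memR T hi hmem

lemma upL0_toSubmodule_eq :
    (upL0 T).toSubmodule = Submodule.span ℂ (Bset T) := by
  apply le_antisymm
  · have h : upL0 T ≤ BSub T := by
      rw [upL0, LieSubalgebra.lieSpan_le]
      rintro A (hA | ⟨j, hj, rfl⟩)
      · rw [Set.mem_singleton_iff] at hA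
        subst hA
        exact Submodule.subset_span ⟨0, 0, (memR_zero_iff T).mpr rfl, pd_zero_eq⟩
      · exact Submodule.subset_span
          ⟨j, fun a => if a = T.parent j then T.weight j else 0, memR_dfun T hj,
            by rw [mXpow_single]⟩
    exact fun x hx => h hx
  · rw [Submodule.span_le]
    intro A hA
    exact Bset_sub_upL0 T A hA

lemma memR_bound {i : Fin n} {j : Fin n → ℕ} (h : memR T i j) (a : Fin n) :
    j a ≤ chainWt T i := by
  obtain ⟨hsupp, hsum⟩ := (memR_iff T).mp h
  by_cases ha : a ∈ (clanSet T i).erase i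
  · have h1 : j a * chainWt T a ≤ Wtot T j := by
      have := Finset.single_le_sum (f := fun b => j b * chainWt T b) (fun b _ => Nat.zero_le _)
        (Finset.mem_univ a)
      beta_reduce at this
      exact this
    have h2 : j a ≤ j a * chainWt T a := Nat.le_mul_of_pos_right _ (chainWt_pos T a)
    omega
  · rw [hsupp a ha]
    exact Nat.zero_le _

lemma fiber_finite (i : Fin n) : Finite {j : Fin n → ℕ // memR T i j} := by
  apply Finite.of_injective
    (fun p : {j : Fin n → ℕ // memR T i j} =>
      (fun a => (⟨p.1 a, Nat.lt_succ_of_le (memR_bound T p.2 a)⟩ : Fin (chainWt T i + 1)) :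
        Fin n → Fin (chainWt T i + 1)))
  intro p q hpq
  apply Subtype.ext
  funext a
  have := congrFun hpq a
  exact congrArg Fin.val this

lemma ellCard_zero : ellCard T (0 : Fin n) = 1 := by
  have h0 : memR T (0 : Fin n) 0 := (memR_zero_iff T).mpr rfl
  haveI : Unique {j : Fin n → ℕ // memR T (0 : Fin n) j} :=
    ⟨⟨⟨0, h0⟩⟩, fun j => Subtype.ext ((memR_zero_iff T).mp j.2)⟩
  exact Nat.card_unique

/-- index for the basis -/
abbrev Idx (T : TreeDiagram n) : Type := (i : Fin n) × {j : Fin n → ℕ // memR T i j}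

def Fbasis : Idx T → DiffOp n := fun p => mXpow p.2.1 * pd p.1

lemma range_F : Set.range (Fbasis T) = Bset T := by
  ext A
  constructor
  · rintro ⟨⟨i, j, hj⟩, rfl⟩
    exact ⟨i, j, hj, rfl⟩
  · rintro ⟨i, j, hj, rfl⟩
    exact ⟨⟨i, ⟨j, hj⟩⟩, rfl⟩

/-- the evaluation functional -/
def Xi : DiffOp n →ₗ[ℂ] ((Fin n × (Fin n →₀ ℕ)) → ℂ) where
  toFun := fun A p => MvPolynomial.coeff p.2 (A (X p.1))
  map_add' := fun A B => by funext p; simp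
  map_smul' := fun c A => by funext p; simp

lemma li_delta {α ι : Type} [DecidableEq α] {e : ι → α} (he : Function.Injective e) :
    LinearIndependent ℂ (fun k : ι => (fun a => if a = e k then (1 : ℂ) else 0 : α → ℂ)) := by
  rw [linearIndependent_iff']
  intro t g h k hk
  have hc := congrFun h (e k)
  simp only [Finset.sum_apply, Pi.smul_apply, smul_eq_mul, Pi.zero_apply] at hc
  rw [Finset.sum_eq_single k] at hc
  · simpa using hc
  · intro b _ hbk
    have hne : e k ≠ e b := fun hh => hbk (he hh.symm)
    simp [hne]
  · intro hkk
    exact absurd hk hkk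

lemma Xi_F (p : Idx T) : Xi (Fbasis T p) =
    fun q => if q = (p.1, Finsupp.equivFunOnFinite.symm p.2.1) then (1 : ℂ) else 0 := by
  obtain ⟨i, j, hj⟩ := p
  funext q
  obtain ⟨q1, q2⟩ := q
  show MvPolynomial.coeff q2 ((mXpow j * pd i) (X q1)) = _
  have h1 : (mXpow j * pd i) (X q1) = Mon j * (pderiv i (X q1)) := rfl
  rw [h1]
  by_cases hq1 : q1 = i
  · subst hq1
    rw [pderiv_X_self, mul_one, Mon_eq_monomial, MvPolynomial.coeff_monomial]
    by_cases hq2 : q2 = Finsupp.equivFunOnFinite.symm j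
    · rw [if_pos hq2.symm, if_pos (by rw [hq2])]
    · rw [if_neg (fun h => hq2 h.symm), if_neg (by simp [hq2])]
  · rw [pderiv_X_of_ne hq1, mul_zero, MvPolynomial.coeff_zero,
      if_neg (by simp [hq1])]

lemma F_linearIndependent : LinearIndependent ℂ (Fbasis T) := by
  apply LinearIndependent.of_comp (Xi (n := n))
  have he : Function.Injective
      (fun p : Idx T => ((p.1, Finsupp.equivFunOnFinite.symm p.2.1) :
        Fin n × (Fin n →₀ ℕ))) := by
    rintro ⟨i, j, hj⟩ ⟨i', j', hj'⟩ h
    have h1 : i = i' := congrArg Prod.fst h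
    subst h1
    have h2 : Finsupp.equivFunOnFinite.symm j = Finsupp.equivFunOnFinite.symm j' :=
      congrArg Prod.snd h
    have h3 : j = j' := Finsupp.equivFunOnFinite.symm.injective h2
    subst h3
    rfl
  have hcomp : (Xi (n := n)) ∘ (Fbasis T) =
      fun p : Idx T => (fun q => if q = (p.1, Finsupp.equivFunOnFinite.symm p.2.1)
        then (1 : ℂ) else 0) := by
    funext p
    exact Xi_F T p
  rw [hcomp]
  exact li_delta he

lemma upL0_finrank : Module.finrank ℂ ↥(upL0 T) = ∑ i : Fin n, ellCard T i := by
  haveI : ∀ i : Fin n, Fintype {j : Fin n → ℕ // memR T i j} := fun i =>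
    @Fintype.ofFinite _ (fiber_finite T i)
  have h1 : (upL0 T).toSubmodule = Submodule.span ℂ (Set.range (Fbasis T)) := by
    rw [range_F]
    exact upL0_toSubmodule_eq T
  have h2 : Module.finrank ℂ ↥(upL0 T) =
      Module.finrank ℂ ↥(Submodule.span ℂ (Set.range (Fbasis T))) :=
    (LinearEquiv.ofEq _ _ h1).finrank_eq
  rw [h2, finrank_span_eq_card (F_linearIndependent T)]
  have h3 : Fintype.card (Idx T) = ∑ i : Fin n, Fintype.card {j : Fin n → ℕ // memR T i j} :=
    Fintype.card_sigma
  rw [h3]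
  apply Finset.sum_congr rfl
  intro i _
  rw [ellCard, Nat.card_eq_fintype_card]

end UPL
end
noncomputable section

/-- Proposition 2.1. -/
theorem upL0_dimension (n : ℕ) [NeZero n] (T : TreeDiagram n) :
    Module.finrank ℂ ↥(upL0 T) =
      1 + ∑ i ∈ Finset.univ.filter (fun i : Fin n => i ≠ 0), ellCard T i := by
  rw [UPL.upL0_finrank T]
  rw [Finset.filter_ne']
  rw [← Finset.add_sum_erase Finset.univ (fun i => ellCard T i) (Finset.mem_univ (0 : Fin n))]
  rw [UPL.ellCard_zero T]

end
end

section
/- Let T^d=(N,E,d) be a tree diagram with n nodes and let I be an abelian ideal of L_1(T^d). Let 2≤i≤n be a node with clan C_i={ι_{i_1},…,ι_{i_r}} such that d[(ι_{i_{r−1}},ι_i)] > 1. Then ∂_{x_1} ∉ I, and for every 2 ≤ s < r and all exponents j_1,…,j_{s−1}∈ℕ, the operator x_{i_1}^{j_1}⋯x_{i_{s−1}}^{j_{s−1}} ∂_{x_{i_s}} does not belong to I. -/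
noncomputable section

attribute [local instance 100] LieRing.ofAssociativeRing

variable {n : ℕ} [NeZero n]

end

noncomputable section

noncomputable section AuxProof

open LinearMap MvPolynomial

attribute [local instance 100] LieRing.ofAssociativeRing

variable {n : ℕ} [NeZero n]

private lemma pd_apply' (a : Fin n) (p : MvPolynomial (Fin n) ℂ) : pd a p = pderiv a p := rfl

private lemma pd_mul_mulLeft (a : Fin n) (Q : MvPolynomial (Fin n) ℂ) :
    pd a * mulLeft ℂ Q = mulLeft ℂ (pderiv a Q) + mulLeft ℂ Q * pd a := by
  refine LinearMap.ext fun p => ?_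
  simp only [Module.End.mul_apply, LinearMap.add_apply, mulLeft_apply, pd_apply']
  exact pderiv_mul

private lemma pd_comm (a b : Fin n) : pd a * pd b = pd b * pd a := by
  refine LinearMap.ext fun p => ?_
  simp only [Module.End.mul_apply, pd_apply']
  induction p using MvPolynomial.induction_on' with
  | monomial s c =>
    simp only [pderiv_monomial]
    rw [monomial_eq_monomial_iff]
    by_cases hab : a = b
    · subst hab; left; exact ⟨rfl, rfl⟩
    · left
      refine ⟨tsub_right_comm, ?_⟩
      have h1 : ((s - Finsupp.single b 1 : Fin n →₀ ℕ)) a = s a := by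
        simp [Finsupp.tsub_apply, Finsupp.single_apply, Ne.symm hab]
      have h2 : ((s - Finsupp.single a 1 : Fin n →₀ ℕ)) b = s b := by
        simp [Finsupp.tsub_apply, Finsupp.single_apply, hab]
      rw [h1, h2]; ring
  | add p q hp hq => simp [hp, hq]

private lemma pderiv_comm' (a b : Fin n) (p : MvPolynomial (Fin n) ℂ) :
    pderiv a (pderiv b p) = pderiv b (pderiv a p) := by
  have h2 := congrArg (fun (f : DiffOp n) => f p) (pd_comm a b)
  simpa [Module.End.mul_apply, pd_apply'] using h2

private lemma bracket_mulLeft_pd (P Q : MvPolynomial (Fin n) ℂ) (a b : Fin n) :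
    ⁅(mulLeft ℂ P * pd a : DiffOp n), mulLeft ℂ Q * pd b⁆ =
      mulLeft ℂ (P * pderiv a Q) * pd b - mulLeft ℂ (Q * pderiv b P) * pd a := by
  refine LinearMap.ext fun p => ?_
  simp only [Ring.lie_def, LinearMap.sub_apply, Module.End.mul_apply, mulLeft_apply,
    pd_apply', pderiv_mul]
  rw [pderiv_comm' a b p]
  ring

/-- The basic operators `t · x^d ∂_c`. -/
private def Mop (d : Fin n →₀ ℕ) (t : ℂ) (c : Fin n) : DiffOp n :=
  mulLeft ℂ (monomial d t) * pd c

private lemma zero_op_sub (q : MvPolynomial (Fin n) ℂ) (a b : Fin n) :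
    mulLeft ℂ (0 : MvPolynomial (Fin n) ℂ) * pd a - mulLeft ℂ q * pd b
      = mulLeft ℂ (-q) * pd b := by
  refine LinearMap.ext fun r => ?_
  show 0 * pderiv a r - q * pderiv b r = -q * pderiv b r
  ring

section Clan

variable (T : TreeDiagram n)

private lemma clanSet_zero : clanSet T (0 : Fin n) = {(0 : Fin n)} := by
  rw [clanSet]; simp

private lemma clanSet_of_ne {i : Fin n} (h : i ≠ 0) :
    clanSet T i = insert i (clanSet T (T.parent i)) := by
  rw [clanSet]; simp [h]

private lemma self_mem_clanSet (i : Fin n) : i ∈ clanSet T i := by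
  by_cases h : i = 0
  · subst h; rw [clanSet_zero]; exact Finset.mem_singleton_self _
  · rw [clanSet_of_ne T h]; exact Finset.mem_insert_self _ _

private lemma val_le_of_mem_clanSet :
    ∀ (k : ℕ) (i : Fin n), i.val = k → ∀ a ∈ clanSet T i, a.val ≤ i.val := by
  intro k
  induction k using Nat.strong_induction_on with
  | _ k IH =>
    intro i hk a ha
    by_cases h : i = 0
    · subst h; rw [clanSet_zero] at ha
      simp only [Finset.mem_singleton] at ha
      simp [ha]
    · rw [clanSet_of_ne T h] at ha
      rcases Finset.mem_insert.1 ha with h1 | h1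
      · simp [h1]
      · have hp : (T.parent i).val < i.val := T.parent_lt i h
        exact le_trans (IH _ (hk ▸ hp) _ rfl a h1) (le_of_lt hp)

private lemma zero_mem_clanSet : ∀ (k : ℕ) (i : Fin n), i.val = k → (0 : Fin n) ∈ clanSet T i := by
  intro k
  induction k using Nat.strong_induction_on with
  | _ k IH =>
    intro i hk
    by_cases h : i = 0
    · subst h; rw [clanSet_zero]; simp
    · rw [clanSet_of_ne T h]
      have hp : (T.parent i).val < i.val := T.parent_lt i h
      exact Finset.mem_insert_of_mem (IH _ (hk ▸ hp) _ rfl)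

end Clan

private lemma gen_mem_upL1 (T : TreeDiagram n) {s : Fin n} (hs : s ≠ 0) :
    (mX (T.parent s)) ^ (T.weight s) * pd s ∈ upL1 T := by
  refine Submodule.mem_sup_right ?_
  have h : (mX (T.parent s)) ^ (T.weight s) * pd s ∈ upGens T :=
    Or.inr ⟨s, hs, rfl⟩
  exact LieSubalgebra.subset_lieSpan h

private lemma step_mem (T : TreeDiagram n) (I : Submodule ℂ (DiffOp n))
    (hI : IsAbelianIdeal (upL1 T) I) {s : Fin n} (hs : s ≠ 0) (d : Fin n →₀ ℕ) (t : ℂ)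
    (hds : d s = 0) (h : Mop d t (T.parent s) ∈ I) :
    Mop (d + Finsupp.single (T.parent s) (T.weight s - 1)) (-(t * (T.weight s : ℂ))) s ∈ I := by
  set c := T.parent s with hc
  set w := T.weight s with hwdef
  have hb : ⁅(mX c) ^ w * pd s, Mop d t c⁆ ∈ I :=
    hI.2.1 _ (gen_mem_upL1 T hs) _ h
  have hx : (mX c) ^ w = mulLeft ℂ (monomial (Finsupp.single c w) (1 : ℂ)) := by
    rw [show mX c = mulLeft ℂ (X c) from rfl, pow_mulLeft, X_pow_eq_monomial]
  have h1 : pderiv s (monomial d t) = 0 := by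
    rw [pderiv_monomial, hds]; simp
  have h2 : pderiv c (monomial (Finsupp.single c w) (1 : ℂ))
      = monomial (Finsupp.single c (w - 1)) ((w : ℂ)) := by
    rw [pderiv_monomial, ← Finsupp.single_tsub]
    simp [Finsupp.single_eq_same]
  have hrw : ⁅(mX c) ^ w * pd s, Mop d t c⁆
      = Mop (d + Finsupp.single c (w - 1)) (-(t * (w : ℂ))) s := by
    simp only [Mop]
    rw [hx, bracket_mulLeft_pd, h1, h2, mul_zero, monomial_mul, zero_op_sub, ← map_neg]
  rwa [hrw] at hb

/-- Packaged descent step along an edge. -/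
private lemma step_clan (T : TreeDiagram n) (I : Submodule ℂ (DiffOp n))
    (hI : IsAbelianIdeal (upL1 T) I) {p : Fin n} (hp : p ≠ 0) (d : Fin n →₀ ℕ) (t : ℂ)
    (ht : t ≠ 0)
    (hd : ∀ a : Fin n, a ∉ (clanSet T (T.parent p)).erase (T.parent p) → d a = 0)
    (h : Mop d t (T.parent p) ∈ I) :
    ∃ (d' : Fin n →₀ ℕ) (t' : ℂ), t' ≠ 0 ∧
      (∀ a : Fin n, a ∉ (clanSet T p).erase p → d' a = 0) ∧ Mop d' t' p ∈ I := by
  set q := T.parent p with hq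
  have hqp : q.val < p.val := T.parent_lt p hp
  have hdp : d p = 0 := by
    refine hd p ?_
    intro hmem
    have := val_le_of_mem_clanSet T q.val q rfl p (Finset.mem_of_mem_erase hmem)
    omega
  have hw0 : (T.weight p : ℂ) ≠ 0 := by
    have := T.weight_pos p hp
    exact_mod_cast this.ne'
  refine ⟨d + Finsupp.single q (T.weight p - 1), -(t * (T.weight p : ℂ)),
    by simp [ht, hw0], ?_, step_mem T I hI hp d t hdp h⟩
  intro a ha
  have hq_mem : q ∈ (clanSet T p).erase p := by
    refine Finset.mem_erase.2 ⟨?_, ?_⟩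
    · intro h'; rw [h'] at hqp; omega
    · rw [clanSet_of_ne T hp]
      exact Finset.mem_insert_of_mem (self_mem_clanSet T q)
  have haq : a ≠ q := fun hqa => ha (hqa ▸ hq_mem)
  have hda : d a = 0 := by
    refine hd a ?_
    intro hmem
    rcases Finset.mem_erase.1 hmem with ⟨hne, hmem'⟩
    refine ha (Finset.mem_erase.2 ⟨?_, ?_⟩)
    · intro h'; subst h'
      have := val_le_of_mem_clanSet T q.val q rfl a hmem'
      omega
    · rw [clanSet_of_ne T hp]
      exact Finset.mem_insert_of_mem hmem'
  simp [Finsupp.add_apply, hda, Finsupp.single_apply, Ne.symm haq]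

/-- Descent along the clan: from an element supported above `c` we reach `p`. -/
private lemma descent (T : TreeDiagram n) (I : Submodule ℂ (DiffOp n))
    (hI : IsAbelianIdeal (upL1 T) I) :
    ∀ (k : ℕ) (p : Fin n), p.val = k → ∀ c ∈ (clanSet T p).erase p,
      ∀ (d : Fin n →₀ ℕ) (t : ℂ), t ≠ 0 →
      (∀ a : Fin n, a ∉ (clanSet T c).erase c → d a = 0) → Mop d t c ∈ I →
      ∃ (d' : Fin n →₀ ℕ) (t' : ℂ), t' ≠ 0 ∧
        (∀ a : Fin n, a ∉ (clanSet T p).erase p → d' a = 0) ∧ Mop d' t' p ∈ I := by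
  intro k
  induction k using Nat.strong_induction_on with
  | _ k IH =>
    intro p hk c hc d t ht hd hmem
    have hp0 : p ≠ 0 := by
      intro h; subst h
      rw [clanSet_zero] at hc
      simp at hc
    rcases Finset.mem_erase.1 hc with ⟨hcp, hcmem⟩
    rw [clanSet_of_ne T hp0] at hcmem
    have hcq : c ∈ clanSet T (T.parent p) := by
      rcases Finset.mem_insert.1 hcmem with h | h
      · exact absurd h hcp
      · exact h
    by_cases hceq : c = T.parent p
    · subst hceq
      exact step_clan T I hI hp0 d t ht hd hmem
    · have hce : c ∈ (clanSet T (T.parent p)).erase (T.parent p) :=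
        Finset.mem_erase.2 ⟨hceq, hcq⟩
      have hplt : (T.parent p).val < k := hk ▸ T.parent_lt p hp0
      obtain ⟨d'', t'', ht'', h1, h2⟩ := IH _ hplt (T.parent p) rfl c hce d t ht hd hmem
      exact step_clan T I hI hp0 d'' t'' ht'' h1 h2

/-- The final contradiction at the special node `i`. -/
private lemma final_contradiction (T : TreeDiagram n) (I : Submodule ℂ (DiffOp n))
    (hI : IsAbelianIdeal (upL1 T) I) {i : Fin n} (hi : i ≠ 0) (hw : 1 < T.weight i)
    (d : Fin n →₀ ℕ) (t : ℂ) (ht : t ≠ 0)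
    (hd : ∀ a : Fin n, a ∉ (clanSet T (T.parent i)).erase (T.parent i) → d a = 0)
    (h : Mop d t (T.parent i) ∈ I) : False := by
  set p := T.parent i with hpdef
  have hpi : p.val < i.val := T.parent_lt i hi
  have hdi : d i = 0 := by
    refine hd i ?_
    intro hmem
    have := val_le_of_mem_clanSet T p.val p rfl i (Finset.mem_of_mem_erase hmem)
    omega
  have hdp : d p = 0 := hd p (fun hmem => (Finset.notMem_erase p _) hmem)
  set e := T.weight i - 1 with hedef
  have he : 1 ≤ e := by omega
  set t' : ℂ := -(t * (T.weight i : ℂ)) with ht'def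
  have ht' : t' ≠ 0 := by
    have hw0 : (T.weight i : ℂ) ≠ 0 := by
      have := T.weight_pos i hi
      exact_mod_cast this.ne'
    simp [ht'def, ht, hw0]
  have hW : Mop (d + Finsupp.single p e) t' i ∈ I := step_mem T I hI hi d t hdi h
  have habel := hI.2.2 _ h _ hW
  -- compute the bracket
  have h1 : pderiv i (monomial d t) = 0 := by
    rw [pderiv_monomial, hdi]; simp
  have h2 : pderiv p (monomial (d + Finsupp.single p e) t')
      = monomial (d + Finsupp.single p e - Finsupp.single p 1) (t' * (e : ℂ)) := by
    rw [pderiv_monomial]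
    congr 1
    simp [Finsupp.add_apply, hdp, Finsupp.single_eq_same]
  simp only [Mop] at habel
  rw [bracket_mulLeft_pd, h1, h2, mul_zero, monomial_mul] at habel
  -- evaluate at X i
  have h4 := congrArg (fun (f : DiffOp n) => f (X i)) habel
  simp only [LinearMap.sub_apply, Module.End.mul_apply, mulLeft_apply, pd_apply',
    LinearMap.zero_apply] at h4
  rw [pderiv_X_self] at h4
  have h5 : monomial (d + (d + Finsupp.single p e - Finsupp.single p 1)) (t * (t' * (e : ℂ)))
      = 0 := by
    simpa using h4
  rw [monomial_eq_zero] at h5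
  have he0 : (e : ℂ) ≠ 0 := by exact_mod_cast (by omega : e ≠ 0)
  simp [ht, ht', he0] at h5

end AuxProof

/-- Lemma 2.5. -/
theorem upL1_abelian_ideal_exclusion (n : ℕ) [NeZero n] (T : TreeDiagram n)
    (I : Submodule ℂ (DiffOp n)) (hI : IsAbelianIdeal (upL1 T) I)
    (i : Fin n) (hi : i ≠ 0) (hw : 1 < T.weight i) :
    pd (0 : Fin n) ∉ I ∧
    ∀ b ∈ (clanSet T i).erase i, b ≠ 0 →
      ∀ j : Fin n → ℕ, (∀ a : Fin n, a ∉ (clanSet T b).erase b → j a = 0) →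
        mXpow j * pd b ∉ I := by
    classical
  have key : ∀ b ∈ (clanSet T i).erase i, ∀ (d : Fin n →₀ ℕ) (t : ℂ), t ≠ 0 →
      (∀ a : Fin n, a ∉ (clanSet T b).erase b → d a = 0) → Mop d t b ∉ I := by
    intro b hb d t ht hd hmem
    rcases Finset.mem_erase.1 hb with ⟨hbi, hbmem⟩
    rw [clanSet_of_ne T hi] at hbmem
    have hbq : b ∈ clanSet T (T.parent i) := by
      rcases Finset.mem_insert.1 hbmem with h | h
      · exact absurd h hbi
      · exact h
    by_cases hbp : b = T.parent i
    · subst hbp; exact final_contradiction T I hI hi hw d t ht hd hmem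
    · obtain ⟨d', t', ht', h1, h2⟩ := descent T I hI (T.parent i).val (T.parent i) rfl b
        (Finset.mem_erase.2 ⟨hbp, hbq⟩) d t ht hd hmem
      exact final_contradiction T I hI hi hw d' t' ht' h1 h2
  have hzc : (0 : Fin n) ∈ (clanSet T i).erase i :=
    Finset.mem_erase.2 ⟨Ne.symm hi, zero_mem_clanSet T i.val i rfl⟩
  constructor
  · intro h0
    have hMop : Mop (0 : Fin n →₀ ℕ) 1 (0 : Fin n) = pd (0 : Fin n) := by
      simp only [Mop, MvPolynomial.monomial_zero', map_one, LinearMap.mulLeft_one,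
        ← Module.End.one_eq_id, one_mul]
    exact key 0 hzc 0 1 one_ne_zero (fun a _ => rfl) (hMop ▸ h0)
  · intro b hb hb0 j hj hmem
    set d : Fin n →₀ ℕ := Finsupp.equivFunOnFinite.symm j with hddef
    have hda : ∀ a, d a = j a := fun a => rfl
    have hM : mXpow j * pd b = Mop d 1 b := by
      simp only [mXpow, Mop]
      congr 2
      calc ∏ a : Fin n, MvPolynomial.X a ^ j a
          = ∏ a : Fin n, MvPolynomial.X (R := ℂ) a ^ d a := by
            refine Finset.prod_congr rfl fun a _ => by rw [hda]
        _ = ∏ a ∈ d.support, MvPolynomial.X a ^ d a :=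
            (Finset.prod_subset (Finset.subset_univ _) (fun x _ hx => by
              rw [Finsupp.notMem_support_iff.1 hx, pow_zero])).symm
        _ = MvPolynomial.monomial d 1 := MvPolynomial.prod_X_pow_eq_monomial
    exact key b hb d 1 one_ne_zero (fun a ha => by rw [hda]; exact hj a ha) (hM ▸ hmem)

end
end
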